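/- In the twisted ring group model of the compact g₂, the Killing form is negative definite; in the rescaled basis {(1/2)(1,0)gᵢ, (1/(2√3))(0,1)gᵢ : i = 1,...,7}, the Killing form is −1 times the identity matrix (an orthonormal basis of norm −1). -/

import Mathlib

noncomputable section

/-- The underlying 14-dimensional real vector space
`L = R[G^×] = ⊕_{i=1}^{7} (ℝ×ℝ)·gᵢ`, with `R = ℝ×ℝ` and the seven nonzero
elements of `(ZMod 2)³` labelled by `ZMod 7` (index `0` represents `g₇`;
the labelling satisfies `gᵢ + g_{i+1} = g_{i+3}` mod 7). -/
abbrev L : Type := ZMod 7 → ℝ × ℝ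

/-- `σ_{i,i+1}(r,r') = (r * r'P)Q̄θ`, explicitly
`(1/4)((a−3b)a' + 3(a+b)b', (b−3a)b' − (a+b)a')` for `r=(a,b)`, `r'=(a',b')`. -/
def σ1 (r r' : ℝ × ℝ) : ℝ × ℝ :=
  (((r.1 - 3*r.2) * r'.1 + 3*(r.1 + r.2) * r'.2) / 4,
   ((r.2 - 3*r.1) * r'.2 - (r.1 + r.2) * r'.1) / 4)

/-- `σ_{i,i+2}(r,r') = (rP * r'Q̄)θ`, explicitly
`(1/4)((a+3b)(a'−3b'), −(a−b)(a'+b'))`. -/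
def σ2 (r r' : ℝ × ℝ) : ℝ × ℝ :=
  ((r.1 + 3*r.2) * (r'.1 - 3*r'.2) / 4,
   -((r.1 - r.2) * (r'.1 + r'.2)) / 4)

/-- `σ_{i,i+4}(r,r') = (rQ̄ * r')Q̄`, explicitly
`(1/4)((a−3b)a' − 3(a+b)b', (a−3b)a' + (a+b)b')`. -/
def σ4 (r r' : ℝ × ℝ) : ℝ × ℝ :=
  (((r.1 - 3*r.2) * r'.1 - 3*(r.1 + r.2) * r'.2) / 4,
   ((r.1 - 3*r.2) * r'.1 + (r.1 + r.2) * r'.2) / 4)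

/-- The bracket `[r·gᵢ, r'·gⱼ]` of two homogeneous elements: zero for `i = j`,
`σ_{ij}(r,r')·g_{i+j}` otherwise, extended antisymmetrically
(`σ_{ji}(r',r) = −σ_{ij}(r,r')`). -/
def brTerm (i : ZMod 7) (r : ℝ × ℝ) (j : ZMod 7) (r' : ℝ × ℝ) : L :=
  if j = i + 1 then Pi.single (i + 3) (σ1 r r')
  else if j = i + 2 then Pi.single (i + 6) (σ2 r r')
  else if j = i + 4 then Pi.single (i + 5) (σ4 r r')
  else if j = i + 3 then -Pi.single (i + 1) (σ4 r' r)
  else if j = i + 5 then -Pi.single (i + 4) (σ2 r' r)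
  else if j = i + 6 then -Pi.single (i + 2) (σ1 r' r)
  else 0

/-- The bilinear bracket on `L = R^σ[G^×]`. -/
def bracket (x y : L) : L :=
  ∑ i : ZMod 7, ∑ j : ZMod 7, brTerm i (x i) j (y j)

lemma σ1_addl (a b r : ℝ × ℝ) : σ1 (a + b) r = σ1 a r + σ1 b r := by
  simp only [σ1, Prod.mk_add_mk, Prod.ext_iff, Prod.fst_add, Prod.snd_add]
  constructor <;> ring
lemma σ1_addr (r a b : ℝ × ℝ) : σ1 r (a + b) = σ1 r a + σ1 r b := by
  simp only [σ1, Prod.mk_add_mk, Prod.ext_iff, Prod.fst_add, Prod.snd_add]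
  constructor <;> ring
lemma σ2_addl (a b r : ℝ × ℝ) : σ2 (a + b) r = σ2 a r + σ2 b r := by
  simp only [σ2, Prod.mk_add_mk, Prod.ext_iff, Prod.fst_add, Prod.snd_add]
  constructor <;> ring
lemma σ2_addr (r a b : ℝ × ℝ) : σ2 r (a + b) = σ2 r a + σ2 r b := by
  simp only [σ2, Prod.mk_add_mk, Prod.ext_iff, Prod.fst_add, Prod.snd_add]
  constructor <;> ring
lemma σ4_addl (a b r : ℝ × ℝ) : σ4 (a + b) r = σ4 a r + σ4 b r := by
  simp only [σ4, Prod.mk_add_mk, Prod.ext_iff, Prod.fst_add, Prod.snd_add]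
  constructor <;> ring
lemma σ4_addr (r a b : ℝ × ℝ) : σ4 r (a + b) = σ4 r a + σ4 r b := by
  simp only [σ4, Prod.mk_add_mk, Prod.ext_iff, Prod.fst_add, Prod.snd_add]
  constructor <;> ring
lemma σ1_smull (c : ℝ) (a r : ℝ × ℝ) : σ1 (c • a) r = c • σ1 a r := by
  simp only [σ1, Prod.smul_mk, Prod.ext_iff, Prod.smul_fst, Prod.smul_snd, smul_eq_mul]
  constructor <;> ring
lemma σ1_smulr (c : ℝ) (r a : ℝ × ℝ) : σ1 r (c • a) = c • σ1 r a := by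
  simp only [σ1, Prod.smul_mk, Prod.ext_iff, Prod.smul_fst, Prod.smul_snd, smul_eq_mul]
  constructor <;> ring
lemma σ2_smull (c : ℝ) (a r : ℝ × ℝ) : σ2 (c • a) r = c • σ2 a r := by
  simp only [σ2, Prod.smul_mk, Prod.ext_iff, Prod.smul_fst, Prod.smul_snd, smul_eq_mul]
  constructor <;> ring
lemma σ2_smulr (c : ℝ) (r a : ℝ × ℝ) : σ2 r (c • a) = c • σ2 r a := by
  simp only [σ2, Prod.smul_mk, Prod.ext_iff, Prod.smul_fst, Prod.smul_snd, smul_eq_mul]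
  constructor <;> ring
lemma σ4_smull (c : ℝ) (a r : ℝ × ℝ) : σ4 (c • a) r = c • σ4 a r := by
  simp only [σ4, Prod.smul_mk, Prod.ext_iff, Prod.smul_fst, Prod.smul_snd, smul_eq_mul]
  constructor <;> ring
lemma σ4_smulr (c : ℝ) (r a : ℝ × ℝ) : σ4 r (c • a) = c • σ4 r a := by
  simp only [σ4, Prod.smul_mk, Prod.ext_iff, Prod.smul_fst, Prod.smul_snd, smul_eq_mul]
  constructor <;> ring

lemma brTerm_addr (i : ZMod 7) (r : ℝ × ℝ) (j : ZMod 7) (a b : ℝ × ℝ) :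
    brTerm i r j (a + b) = brTerm i r j a + brTerm i r j b := by
  unfold brTerm
  split_ifs <;>
    simp [σ1_addr, σ2_addr, σ4_addr, σ1_addl, σ2_addl, σ4_addl, Pi.single_add] <;>
    abel

lemma brTerm_smulr (i : ZMod 7) (r : ℝ × ℝ) (j : ZMod 7) (c : ℝ) (a : ℝ × ℝ) :
    brTerm i r j (c • a) = c • brTerm i r j a := by
  unfold brTerm
  split_ifs <;>
    simp [σ1_smulr, σ2_smulr, σ4_smulr, σ1_smull, σ2_smull, σ4_smull, Pi.single_smul]

/-- The adjoint operator `ad x = [x, ·]` as a linear endomorphism of `L`. -/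
def ad (x : L) : Module.End ℝ L where
  toFun := bracket x
  map_add' y z := by
    unfold bracket
    rw [← Finset.sum_add_distrib]
    refine Finset.sum_congr rfl fun i _ => ?_
    rw [← Finset.sum_add_distrib]
    exact Finset.sum_congr rfl fun j _ => by simpa using brTerm_addr i (x i) j (y j) (z j)
  map_smul' c y := by
    unfold bracket
    simp only [RingHom.id_apply, Finset.smul_sum]
    refine Finset.sum_congr rfl fun i _ => ?_
    exact Finset.sum_congr rfl fun j _ => by simpa using brTerm_smulr i (x i) j c (y j)

/-- The Killing form `κ(x,y) = tr(ad x ∘ ad y)`. -/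
def killing (x y : L) : ℝ := LinearMap.trace ℝ L (ad x ∘ₗ ad y)

/-- The basis element `(1,0)gᵢ`. -/
def X (i : ZMod 7) : L := Pi.single i (1, 0)
/-- The basis element `(0,1)gᵢ`. -/
def Y (i : ZMod 7) : L := Pi.single i (0, 1)

end

/-- The rescaled basis `{(1/2)(1,0)gᵢ, (1/(2√3))(0,1)gᵢ}`. -/
noncomputable def u (p : ZMod 7 × Fin 2) : L :=
  if p.2 = 0 then (1/2 : ℝ) • X p.1 else (1/(2 * Real.sqrt 3) : ℝ) • Y p.1

set_option maxHeartbeats 1000000 in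
lemma sum_zmod7 {M : Type*} [AddCommMonoid M] (f : ZMod 7 → M) :
    ∑ i : ZMod 7, f i = f 0 + f 1 + f 2 + f 3 + f 4 + f 5 + f 6 :=
  Fin.sum_univ_seven f

lemma brTerm_zero_right (i j : ZMod 7) (r : ℝ × ℝ) : brTerm i r j 0 = 0 := by
  unfold brTerm
  have h1 : σ1 r 0 = 0 := by simp [σ1, Prod.ext_iff]
  have h2 : σ2 r 0 = 0 := by simp [σ2, Prod.ext_iff]
  have h4 : σ4 r 0 = 0 := by simp [σ4, Prod.ext_iff]
  have h1' : σ1 (0 : ℝ × ℝ) r = 0 := by simp [σ1, Prod.ext_iff]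
  have h2' : σ2 (0 : ℝ × ℝ) r = 0 := by simp [σ2, Prod.ext_iff]
  have h4' : σ4 (0 : ℝ × ℝ) r = 0 := by simp [σ4, Prod.ext_iff]
  split_ifs <;> simp [h1, h2, h4, h1', h2', h4']

lemma bracket_single (x : L) (k : ZMod 7) (r : ℝ × ℝ) :
    bracket x (Pi.single k r) = ∑ i : ZMod 7, brTerm i (x i) k r := by
  unfold bracket
  refine Finset.sum_congr rfl fun i _ => ?_
  rw [Finset.sum_eq_single k]
  · rw [Pi.single_eq_same]
  · intro j _ hj; rw [Pi.single_eq_of_ne hj, brTerm_zero_right]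
  · simp

lemma ad_apply (x z : L) : ad x z = bracket x z := rfl
noncomputable def bL : Module.Basis (ZMod 7 × Fin 2) ℝ L :=
  (Pi.basis fun _ : ZMod 7 => Module.Basis.finTwoProd ℝ).reindex (Equiv.sigmaEquivProd _ _)

lemma bL_apply (k : ZMod 7) (s : Fin 2) :
    bL (k, s) = Pi.single k (Module.Basis.finTwoProd ℝ s) := by
  rw [show ((k,s) : ZMod 7 × Fin 2) = Equiv.sigmaEquivProd (ZMod 7) (Fin 2) ⟨k,s⟩ from rfl,
    bL, Module.Basis.reindex_apply, Equiv.symm_apply_apply, Pi.basis_apply]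

lemma bL_repr (z : L) (k : ZMod 7) (s : Fin 2) :
    bL.repr z (k, s) = (Module.Basis.finTwoProd ℝ).repr (z k) s := by
  rw [bL, Module.Basis.repr_reindex_apply]
  exact Pi.basis_repr _ _ _

lemma killing_expand (x y : L) :
    killing x y = ∑ k : ZMod 7, ∑ s : Fin 2,
      (Module.Basis.finTwoProd ℝ).repr ((bracket x (bracket y (Pi.single k (Module.Basis.finTwoProd ℝ s)))) k) s := by
  rw [killing, LinearMap.trace_eq_matrix_trace ℝ bL, Matrix.trace]
  rw [show ∑ p, (LinearMap.toMatrix bL bL (ad x ∘ₗ ad y)).diag p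
      = ∑ p : ZMod 7 × Fin 2, bL.repr ((ad x ∘ₗ ad y) (bL p)) p from
    Finset.sum_congr rfl fun p _ => by rw [Matrix.diag, LinearMap.toMatrix_apply]]
  rw [Fintype.sum_prod_type]
  exact Finset.sum_congr rfl fun k _ => Finset.sum_congr rfl fun s _ => by
    rw [bL_apply, bL_repr]; rfl
lemma bracket_sum {ι : Type*} (x : L) (t : Finset ι) (f : ι → L) :
    bracket x (∑ i ∈ t, f i) = ∑ i ∈ t, bracket x (f i) :=
  map_sum (ad x) f t

lemma bracket_add (x a b : L) : bracket x (a + b) = bracket x a + bracket x b := map_add (ad x) a b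
lemma bracket_sub (x a b : L) : bracket x (a - b) = bracket x a - bracket x b := map_sub (ad x) a b
lemma bracket_neg (x z : L) : bracket x (-z) = -bracket x z := map_neg (ad x) z
lemma bracket_zero (x : L) : bracket x 0 = 0 := map_zero (ad x)

set_option maxHeartbeats 4000000 in
lemma killing_eq (x y : L) :
    killing x y = ∑ i : ZMod 7, (-4*(x i).1*(y i).1 - 12*(x i).2*(y i).2) := by
  rw [killing_expand]
  simp only [sum_zmod7, Fin.sum_univ_two, Module.Basis.finTwoProd_zero, Module.Basis.finTwoProd_one,
    bracket_single, bracket_sum, bracket_add, bracket_sub, bracket_neg, bracket_zero,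
    Module.Basis.coe_finTwoProd_repr]
  simp (config := { decide := true }) only [brTerm, if_true, if_false,
    bracket_single, bracket_sum, bracket_add, bracket_sub, bracket_neg, bracket_zero, sum_zmod7,
    Pi.add_apply, Pi.sub_apply, Pi.neg_apply, Pi.zero_apply, Pi.single_apply,
    Matrix.cons_val_zero, Matrix.cons_val_one, Matrix.head_cons,
    σ1, σ2, σ4, Prod.fst_add, Prod.snd_add, Prod.fst_sub, Prod.snd_sub, Prod.fst_neg, Prod.snd_neg,
    Prod.fst_zero, Prod.snd_zero]
  ring

/-- in the twisted ring group model of the compact `g₂`, the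
Killing form is negative definite, and in the rescaled basis
`{(1/2)(1,0)gᵢ, (1/(2√3))(0,1)gᵢ : i = 1,…,7}` its matrix is `−1` times the
identity (an orthonormal basis of norm `−1`). -/
theorem stmt15 :
    (∀ x : L, x ≠ 0 → killing x x < 0) ∧
    (∀ p q : ZMod 7 × Fin 2, killing (u p) (u q) = if p = q then -1 else 0) := by
  constructor
  · intro x hx
    rw [killing_eq]
    obtain ⟨i₀, hi₀⟩ : ∃ i, x i ≠ 0 := by
      by_contra h; push_neg at h; exact hx (funext h)
    have : (0:ℝ) = ∑ _i : ZMod 7, (0:ℝ) := by simp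
    rw [this]
    apply Finset.sum_lt_sum
    · intro i _; nlinarith [sq_nonneg (x i).1, sq_nonneg (x i).2]
    · refine ⟨i₀, Finset.mem_univ _, ?_⟩
      have h1 : (x i₀).1 ≠ 0 ∨ (x i₀).2 ≠ 0 := by
        by_contra h; push_neg at h; exact hi₀ (Prod.ext h.1 h.2)
      rcases h1 with h | h
      · nlinarith [mul_self_pos.mpr h, sq_nonneg (x i₀).2]
      · nlinarith [mul_self_pos.mpr h, sq_nonneg (x i₀).1]
  · rintro ⟨k, s⟩ ⟨l, t⟩
    rw [killing_eq]
    have h3 : Real.sqrt 3 * Real.sqrt 3 = 3 := Real.mul_self_sqrt (by norm_num)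
    have h3' : Real.sqrt 3 ≠ 0 := by positivity
    by_cases hk : k = l
    · subst hk
      rw [Finset.sum_eq_single k (fun b _ hb => by
        fin_cases s <;>
          simp [u, X, Y, Pi.single_eq_of_ne hb]) (by simp)]
      fin_cases s <;> fin_cases t <;>
        simp [u, X, Y, Prod.ext_iff] <;> field_simp <;> nlinarith [h3]
    · rw [Finset.sum_eq_zero fun i _ => ?_]
      · simp [Prod.ext_iff, hk]
      · by_cases hik : i = k
        · subst hik
          have hil : i ≠ l := hk
          fin_cases t <;> simp [u, X, Y, Pi.single_eq_of_ne hil]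
        · fin_cases s <;> simp [u, X, Y, Pi.single_eq_of_ne hik]
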